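/- Let k ≥ 2, d ≥ 2k, let P ⊂ ℝ^d be a simplicial d-polytope, and let M ⊆ V(∂P) with |M| ≥ k. Suppose there exist a (k−2)-dimensional face F ⊂ M of ∂P and an affine k-stress λ on P such that for every (k−1)-face G = F ∪ {v} of ∂P with v ∉ M, the coefficient λ_G ≤ 0, and at least one such λ_G < 0. Then M is not a face of ∂P. -/

import Mathlib

open scoped Classical

noncomputable section

/-- The body of the polytope with vertex embedding `p`. -/
def body {V : Type} [Fintype V] {d : ℕ} (p : V → EuclideanSpace ℝ (Fin d)) :
    Set (EuclideanSpace ℝ (Fin d)) :=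
  convexHull ℝ (Set.range p)

/-- A finite vertex set `F` spans a proper (exposed) face of the polytope. -/
def IsBdryFace {V : Type} [Fintype V] {d : ℕ} (p : V → EuclideanSpace ℝ (Fin d))
    (F : Finset V) : Prop :=
  IsExposed ℝ (body p) (convexHull ℝ (p '' (F : Set V))) ∧
    convexHull ℝ (p '' (F : Set V)) ≠ body p

/-- `p` is the vertex embedding of a simplicial `d`-polytope: the points are distinct
extreme points, they affinely span `ℝ^d`, and every proper exposed face is the convex hull
of an affinely independent set of vertices (a geometric simplex). -/
structure IsSimplicialPolytope {V : Type} [Fintype V] {d : ℕ}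
    (p : V → EuclideanSpace ℝ (Fin d)) : Prop where
  inj : Function.Injective p
  spans : affineSpan ℝ (Set.range p) = ⊤
  vertex : ∀ v, p v ∈ Set.extremePoints ℝ (body p)
  simplicial : ∀ F : Set (EuclideanSpace ℝ (Fin d)), IsExposed ℝ (body p) F →
    F ≠ body p → ∃ W : Finset V,
      AffineIndependent ℝ (fun w : (W : Set V) => p w) ∧ F = convexHull ℝ (p '' W)

/-- The graph of the polytope: two vertices are adjacent iff they span a proper face. -/
def polyGraph {V : Type} [Fintype V] {d : ℕ} (p : V → EuclideanSpace ℝ (Fin d)) :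
    SimpleGraph V where
  Adj a b := a ≠ b ∧ IsBdryFace p {a, b}
  symm := by
    constructor
    intro a b h
    exact ⟨h.1.symm, by rw [Finset.pair_comm]; exact h.2⟩
  loopless := by constructor; intro a h; exact h.1 rfl
open scoped RealInnerProductSpace

/-- `π` is the altitude vector `π_{F,G}` for `G = F ∪ {v}`: it joins the orthogonal
projection of `p v` onto the affine hull of `p(F)` to `p v`, i.e. `p v − π` lies in
`Aff(p F)` and `π` is orthogonal to the direction of `Aff(p F)`. -/
def IsAltitude {V : Type} [Fintype V] {d : ℕ} (p : V → EuclideanSpace ℝ (Fin d))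
    (F : Finset V) (v : V) (π : EuclideanSpace ℝ (Fin d)) : Prop :=
  p v - π ∈ (affineSpan ℝ (p '' (F : Set V)) : Set (EuclideanSpace ℝ (Fin d))) ∧
  ∀ w ∈ vectorSpan ℝ (p '' (F : Set V)), ⟪π, w⟫ = 0

/-- The coefficient system `lam` on `(k−1)`-faces satisfies the balancing condition of an
affine `k`-stress at every `(k−2)`-face `F` of `∂P`, with respect to the altitude vectors
`π`. -/
def IsBalancedStress {V : Type} [Fintype V] {d : ℕ} (p : V → EuclideanSpace ℝ (Fin d))
    (π : Finset V → V → EuclideanSpace ℝ (Fin d)) (k : ℕ) (lam : Finset V → ℝ) : Prop :=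
  (∀ G : Finset V, ¬ IsBdryFace p G → lam G = 0) ∧
  ∀ F : Finset V, F.card = k - 1 → IsBdryFace p F →
    ∑ v ∈ Finset.univ.filter
        (fun v => v ∉ F ∧ IsBdryFace p (insert v F)),
      lam (insert v F) • π F v = 0
/-- let `k ≥ 2`, `d ≥ 2k`, `P` a simplicial `d`-polytope and `M` a vertex
set with `|M| ≥ k`. If some `(k−2)`-face `F ⊆ M` and some affine `k`-stress `λ` on `P`
satisfy `λ_{F∪v} ≤ 0` for all faces `F ∪ {v}` with `v ∉ M`, with at least one such value
negative, then `M` is not a face of `∂P`. -/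
theorem stmt12 {V : Type} [Fintype V] {d k : ℕ} (hk : 2 ≤ k) (hd : 2 * k ≤ d)
    (p : V → EuclideanSpace ℝ (Fin d)) (hP : IsSimplicialPolytope p)
    (π : Finset V → V → EuclideanSpace ℝ (Fin d))
    (hπ : ∀ (G : Finset V) (v : V), v ∉ G → IsBdryFace p G →
      IsBdryFace p (insert v G) → IsAltitude p G v (π G v))
    (M : Finset V) (hM : k ≤ M.card)
    (F : Finset V) (hFM : F ⊆ M) (hFcard : F.card = k - 1) (hFface : IsBdryFace p F)
    (lam : Finset V → ℝ) (hbal : IsBalancedStress p π k lam)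
    (hsign : ∀ v : V, v ∉ M → IsBdryFace p (insert v F) → lam (insert v F) ≤ 0)
    (hneg : ∃ v : V, v ∉ M ∧ IsBdryFace p (insert v F) ∧ lam (insert v F) < 0) :
    ¬ IsBdryFace p M := by
  intro hMface
  -- F is nonempty
  have hFne : F.Nonempty := Finset.card_pos.mp (by omega)
  obtain ⟨w₀, hw₀⟩ := hFne
  -- p of any vertex of M lies in the face
  have hsubM : ∀ v ∈ M, p v ∈ convexHull ℝ (p '' (M : Set V)) := fun v hv =>
    subset_convexHull ℝ _ ⟨v, hv, rfl⟩
  -- p of any vertex lies in the body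
  have hbody : ∀ v, p v ∈ body p := fun v =>
    subset_convexHull ℝ _ ⟨v, rfl⟩
  -- the face is nonempty; get the exposing functional
  obtain ⟨l, hl⟩ := hMface.1 ⟨p w₀, hsubM w₀ (hFM hw₀)⟩
  set α := l (p w₀) with hα
  have hw₀face : p w₀ ∈ convexHull ℝ (p '' (M : Set V)) := hsubM w₀ (hFM hw₀)
  have hle : ∀ y ∈ body p, l y ≤ α := by
    rw [hl] at hw₀face
    exact hw₀face.2
  have hconst : ∀ x ∈ convexHull ℝ (p '' (M : Set V)), l x = α := by
    intro x hx
    rw [hl] at hx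
    exact le_antisymm (hle x hx.1) (hx.2 (p w₀) (hbody w₀))
  -- the level set {l = α} is an affine subspace containing Aff(p F)
  let S : AffineSubspace ℝ (EuclideanSpace ℝ (Fin d)) :=
    { carrier := {x | l x = α}
      smul_vsub_vadd_mem' := by
        intro c p₁ p₂ p₃ h1 h2 h3
        simp only [Set.mem_setOf_eq] at *
        simp only [vsub_eq_sub, vadd_eq_add, map_add, map_smul, map_sub, h1, h2, h3,
          smul_eq_mul]
        ring }
  have hspanle : affineSpan ℝ (p '' (F : Set V)) ≤ S := by
    rw [affineSpan_le]
    rintro x ⟨w, hw, rfl⟩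
    exact hconst _ (hsubM w (hFM hw))
  have hαspan : ∀ x ∈ (affineSpan ℝ (p '' (F : Set V)) : Set (EuclideanSpace ℝ (Fin d))),
      l x = α := fun x hx => hspanle hx
  -- value of l on altitude vectors
  have hπval : ∀ v : V, v ∉ F → IsBdryFace p (insert v F) → l (π F v) = l (p v) - α := by
    intro v hvF hvface
    have halt := hπ F v hvF hFface hvface
    have h1 : l (p v - π F v) = α := hαspan _ halt.1
    have : l (p v) - l (π F v) = α := by rw [← map_sub]; exact h1
    linarith
  -- vertices not in M have l-value strictly below α if insert v F is a face
  have hstrict : ∀ v : V, v ∉ M → IsBdryFace p (insert v F) → l (p v) < α := by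
    intro v hvM hvface
    rcases lt_or_eq_of_le (hle (p v) (hbody v)) with h | h
    · exact h
    · exfalso
      have hmem : p v ∈ convexHull ℝ (p '' (M : Set V)) := by
        rw [hl]
        exact ⟨hbody v, fun y hy => (hle y hy).trans_eq h.symm⟩
      have hsub : convexHull ℝ (p '' (M : Set V)) ⊆ body p :=
        convexHull_mono (Set.image_subset_range _ _)
      have hext := hP.vertex v
      have hext2 : p v ∈ Set.extremePoints ℝ (convexHull ℝ (p '' (M : Set V))) := by
        refine ⟨hmem, fun x₁ hx₁ x₂ hx₂ hseg => ?_⟩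
        exact hext.2 (hsub hx₁) (hsub hx₂) hseg
      obtain ⟨w, hwM, hwv⟩ := extremePoints_convexHull_subset hext2
      exact hvM (by rwa [hP.inj hwv] at hwM)
  -- apply l to the balancing condition
  set s := Finset.univ.filter (fun v => v ∉ F ∧ IsBdryFace p (insert v F)) with hs
  have hsum : ∑ v ∈ s, lam (insert v F) * l (π F v) = 0 := by
    have h0 := hbal.2 F hFcard hFface
    calc ∑ v ∈ s, lam (insert v F) * l (π F v)
        = l (∑ v ∈ s, lam (insert v F) • π F v) := by
          rw [map_sum]
          refine Finset.sum_congr rfl fun v _ => ?_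
          rw [map_smul, smul_eq_mul]
      _ = 0 := by rw [h0, map_zero]
  -- each term is nonnegative
  have hnonneg : ∀ v ∈ s, 0 ≤ lam (insert v F) * l (π F v) := by
    intro v hv
    rw [hs, Finset.mem_filter] at hv
    obtain ⟨-, hvF, hvface⟩ := hv
    by_cases hvM : v ∈ M
    · have : l (π F v) = 0 := by
        rw [hπval v hvF hvface, hconst _ (hsubM v hvM)]
        ring
      rw [this, mul_zero]
    · have h1 : lam (insert v F) ≤ 0 := hsign v hvM hvface
      have h2 : l (π F v) ≤ 0 := by
        rw [hπval v hvF hvface]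
        linarith [hstrict v hvM hvface]
      nlinarith
  -- one term is strictly positive
  obtain ⟨v₀, hv₀M, hv₀face, hv₀neg⟩ := hneg
  have hv₀F : v₀ ∉ F := fun h => hv₀M (hFM h)
  have hv₀s : v₀ ∈ s := by
    rw [hs, Finset.mem_filter]
    exact ⟨Finset.mem_univ _, hv₀F, hv₀face⟩
  have hpos : 0 < lam (insert v₀ F) * l (π F v₀) := by
    apply mul_pos_of_neg_of_neg hv₀neg
    rw [hπval v₀ hv₀F hv₀face]
    linarith [hstrict v₀ hv₀M hv₀face]
  have := Finset.sum_pos' hnonneg ⟨v₀, hv₀s, hpos⟩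
  linarith

end
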